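/- Let W = (u_1,…,u_ℓ) be a fixed sequence with u_{k+1} ∈ I(u_k), and let v ∈ V with v ≠ u_1. Then the single-trial estimator satisfies s̃_W(v) = Pr[ there exists k with 2 ≤ k ≤ ℓ such that a √c-walk (v_1=v, v_2, …) from v has length at least k and v_k = u_k ]; in particular 0 ≤ s̃_W(v) ≤ 1. -/

import Mathlib

open scoped BigOperators Classical

variable {V : Type*}

/-- `p` is a possible realization of a `√c`-walk from `u`: it is nonempty,
starts at `u`, and each step moves to an in-neighbor of the current node. -/
def IsWalkFrom (I : V → Finset V) (u : V) (p : List V) : Prop :=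
  p.head? = some u ∧ List.Chain' (fun a b => b ∈ I a) p

/-- The probability that the `√c`-walk from `u` is exactly the finite sequence `p`:
`(1−√c)·∏_{k=1}^{ℓ−1} (√c/|I(u_k)|)` if `p = (u_1,…,u_ℓ)` is a walk from `u`,
and `0` otherwise. -/
noncomputable def walkWeight (I : V → Finset V) (c : ℝ) (u : V) (p : List V) : ℝ :=
  if IsWalkFrom I u p then
    (1 - Real.sqrt c) *
      ∏ k ∈ Finset.range (p.length - 1), Real.sqrt c / ((I (p.getD k u)).card : ℝ)
  else 0

/-- Deterministic PROBE scores of a reverse path, where `q` is the *reversed*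
reverse path, i.e. `q = (u_i, u_{i-1}, …, u_1)` for the reverse path
`(u_1,…,u_i)`: `Score(v,0) = 1` iff `v = u_i`, and `Score(v,j+1) = 0` if
`v = u_{i-j-1}` (which is `q[j+1]`), else `∑_{x∈I(v)} (√c/|I(v)|)·Score(x,j)`. -/
noncomputable def Score (I : V → Finset V) (c : ℝ) (q : List V) : ℕ → V → ℝ
  | 0, v => if q.head? = some v then 1 else 0
  | j + 1, v =>
      if q[j + 1]? = some v then 0
      else ∑ x ∈ I v, Real.sqrt c / ((I v).card : ℝ) * Score I c q j x

/-- The single-trial estimator `s̃_W(v) = ∑_{i=2}^{ℓ} Score^{(i)}(v, i−1)` for a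
fixed sequence `W = p`, where `Score^{(i)}` denotes the PROBE scores of the
prefix `(u_1,…,u_i)`. -/
noncomputable def estimator (I : V → Finset V) (c : ℝ) (p : List V) (v : V) : ℝ :=
  ∑ i ∈ Finset.Icc 2 p.length, Score I c ((p.take i).reverse) (i - 1) v

open scoped ENNReal

namespace ProbeAux

variable {I : V → Finset V} {c : ℝ}

noncomputable def Wn (I : V → Finset V) (c : ℝ) (u : V) (w : List V) : ℝ≥0∞ :=
  ENNReal.ofReal (walkWeight I c u w)

lemma ww_nonneg (hc0 : 0 ≤ c) (hc1 : c ≤ 1) (u : V) (w : List V) :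
    0 ≤ walkWeight I c u w := by
  unfold walkWeight
  split
  · apply mul_nonneg
    · have := Real.sqrt_le_one.mpr hc1; linarith
    · exact Finset.prod_nonneg fun k _ =>
        div_nonneg (Real.sqrt_nonneg c) (Nat.cast_nonneg _)
  · exact le_refl 0

lemma ww_nil (u : V) : walkWeight I c u ([] : List V) = 0 := by
  simp [walkWeight, IsWalkFrom]

lemma ww_head {u a : V} {t : List V} (h : a ≠ u) : walkWeight I c u (a :: t) = 0 := by
  rw [walkWeight, if_neg]
  rintro ⟨hh, -⟩
  simp at hh
  exact h hh

lemma ww_single (u : V) : walkWeight I c u [u] = 1 - Real.sqrt c := by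
  rw [walkWeight, if_pos ⟨rfl, List.isChain_singleton u⟩]; simp

lemma ww_cons_cons (u b : V) (t : List V) :
    walkWeight I c u (u :: b :: t) =
      if b ∈ I u then Real.sqrt c / ((I u).card : ℝ) * walkWeight I c b (b :: t)
      else 0 := by
  by_cases hb : b ∈ I u
  · by_cases hch : List.Chain' (fun a b => b ∈ I a) (b :: t)
    · have h1 : IsWalkFrom I u (u :: b :: t) :=
        ⟨rfl, List.isChain_cons_cons.mpr ⟨hb, hch⟩⟩
      have h2 : IsWalkFrom I b (b :: t) := ⟨rfl, hch⟩
      rw [if_pos hb, walkWeight, if_pos h1, walkWeight, if_pos h2]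
      simp only [List.length_cons, Nat.add_sub_cancel]
      rw [Finset.prod_range_succ']
      have hstep : ∀ k ∈ Finset.range t.length,
          Real.sqrt c / ((I ((u :: b :: t).getD (k + 1) u)).card : ℝ)
            = Real.sqrt c / ((I ((b :: t).getD k b)).card : ℝ) := by
        intro k hk
        rw [Finset.mem_range] at hk
        have hk' : k < (b :: t).length := by simp; omega
        rw [List.getD_cons_succ, List.getD_eq_getElem _ _ hk', List.getD_eq_getElem _ _ hk']
      rw [Finset.prod_congr rfl hstep]
      have : (u :: b :: t).getD 0 u = u := rfl
      rw [this]
      ring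
    · have h1 : ¬ IsWalkFrom I u (u :: b :: t) := by
        rintro ⟨-, hch'⟩
        exact hch (List.isChain_cons_cons.mp hch').2
      have h2 : ¬ IsWalkFrom I b (b :: t) := by rintro ⟨-, hch'⟩; exact hch hch'
      rw [walkWeight, if_neg h1, if_pos hb, walkWeight, if_neg h2, mul_zero]
  · have h1 : ¬ IsWalkFrom I u (u :: b :: t) := by
      rintro ⟨-, hch'⟩
      exact hb (List.isChain_cons_cons.mp hch').1
    rw [walkWeight, if_neg h1, if_neg hb]

lemma tsum_list_split (f : List V → ℝ≥0∞) :
    ∑' w : List V, f w = f [] + ∑' (a : V) (t : List V), f (a :: t) := by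
  have hinj : Function.Injective (fun p : V × List V => p.1 :: p.2) := by
    rintro ⟨a, t⟩ ⟨b, s⟩ h
    simp only [List.cons.injEq] at h
    exact Prod.ext h.1 h.2
  have key : ∑' w : List V, (if w = [] then 0 else f w)
      = ∑' (a : V) (t : List V), f (a :: t) := by
    rw [← ENNReal.tsum_prod (f := fun a t => f (a :: t))]
    rw [← hinj.tsum_eq (f := fun w => if w = [] then 0 else f w)]
    · exact tsum_congr fun p => by simp
    · intro w hw
      simp only [Function.mem_support, ne_eq, ite_eq_left_iff, not_forall] at hw
      obtain ⟨hne, -⟩ := hw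
      obtain ⟨a, t, rfl⟩ := List.exists_cons_of_ne_nil hne
      exact ⟨(a, t), rfl⟩
  calc ∑' w : List V, f w
      = ∑' w : List V, ((if w = [] then f w else 0) + (if w = [] then 0 else f w)) :=
        tsum_congr fun w => by split <;> simp
    _ = (∑' w : List V, if w = [] then f w else 0)
        + ∑' w : List V, (if w = [] then 0 else f w) := ENNReal.tsum_add
    _ = f [] + ∑' (a : V) (t : List V), f (a :: t) := by
        rw [key, tsum_eq_single ([] : List V) (fun w hw => if_neg hw)]
        simp

lemma tsum_walk_head (b : V) (h : List V → ℝ≥0∞) :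
    ∑' w : List V, Wn I c b w * h w = ∑' t : List V, Wn I c b (b :: t) * h (b :: t) := by
  rw [tsum_list_split (fun w => Wn I c b w * h w)]
  have h0 : Wn I c b ([] : List V) = 0 := by simp [Wn, ww_nil]
  rw [h0, zero_mul, zero_add]
  rw [tsum_eq_single b]
  intro a ha
  have : ∀ t : List V, Wn I c b (a :: t) * h (a :: t) = 0 := fun t => by
    rw [Wn, ww_head ha, ENNReal.ofReal_zero, zero_mul]
  simp [this]

lemma tsum_rec [Fintype V] (u : V) (g : List V → ℝ≥0∞) :
    ∑' w : List V, Wn I c u w * g w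
      = ENNReal.ofReal (1 - Real.sqrt c) * g [u]
        + ∑ b ∈ I u, ENNReal.ofReal (Real.sqrt c / ((I u).card : ℝ))
            * ∑' w : List V, Wn I c b w * g (u :: w) := by
  rw [tsum_walk_head u g, tsum_list_split (fun t => Wn I c u (u :: t) * g (u :: t))]
  congr 1
  · rw [Wn, ww_single]
  have hterm : ∀ (b : V) (t : List V),
      Wn I c u (u :: b :: t) * g (u :: b :: t)
        = if b ∈ I u then ENNReal.ofReal (Real.sqrt c / ((I u).card : ℝ))
            * (Wn I c b (b :: t) * g (u :: b :: t)) else 0 := by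
    intro b t
    rw [Wn, ww_cons_cons]
    split
    · rw [ENNReal.ofReal_mul (div_nonneg (Real.sqrt_nonneg c) (Nat.cast_nonneg _))]
      rw [Wn, mul_assoc]
    · simp
  calc ∑' (b : V) (t : List V), Wn I c u (u :: b :: t) * g (u :: b :: t)
      = ∑' (b : V), (if b ∈ I u then ENNReal.ofReal (Real.sqrt c / ((I u).card : ℝ))
          * ∑' t : List V, Wn I c b (b :: t) * g (u :: b :: t) else 0) := by
        refine tsum_congr fun b => ?_
        by_cases hb : b ∈ I u <;> simp [hterm, hb, ENNReal.tsum_mul_left]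
    _ = ∑ b ∈ I u, ENNReal.ofReal (Real.sqrt c / ((I u).card : ℝ))
          * ∑' t : List V, Wn I c b (b :: t) * g (u :: b :: t) := by
        rw [tsum_fintype, Finset.sum_ite_mem, Finset.univ_inter]
    _ = ∑ b ∈ I u, ENNReal.ofReal (Real.sqrt c / ((I u).card : ℝ))
          * ∑' w : List V, Wn I c b w * g (u :: w) := by
        refine Finset.sum_congr rfl fun b _ => ?_
        rw [tsum_walk_head b (fun w => g (u :: w))]

lemma ofReal_one_split (hc0 : 0 < c) (hc1 : c < 1) (u : V) (h : (I u).Nonempty) :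
    ENNReal.ofReal (1 - Real.sqrt c)
      + (((I u).card : ℝ≥0∞) * ENNReal.ofReal (Real.sqrt c / ((I u).card : ℝ))) = 1 := by
  have hcard : (0:ℝ) < (I u).card := by exact_mod_cast h.card_pos
  have h1 : ((I u).card : ℝ≥0∞) = ENNReal.ofReal ((I u).card : ℝ) := by
    rw [ENNReal.ofReal_natCast]
  rw [h1, ← ENNReal.ofReal_mul (Nat.cast_nonneg _),
    mul_div_cancel₀ _ (ne_of_gt hcard),
    ← ENNReal.ofReal_add (by have := Real.sqrt_le_one.mpr hc1.le; linarith) (Real.sqrt_nonneg c)]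
  rw [sub_add_cancel, ENNReal.ofReal_one]

lemma trunc_le_one [Fintype V] (hI : ∀ v : V, (I v).Nonempty) (hc0 : 0 < c) (hc1 : c < 1) :
    ∀ (n : ℕ) (u : V),
      (∑' w : List V, Wn I c u w * (if w.length ≤ n then 1 else 0)) ≤ 1 := by
  intro n
  induction n with
  | zero =>
    intro u
    have : ∀ w : List V, Wn I c u w * (if w.length ≤ 0 then 1 else 0) = 0 := by
      intro w
      cases w with
      | nil => simp [Wn, ww_nil]
      | cons a t => simp
    rw [tsum_congr this]
    simp
  | succ n ih =>
    intro u
    rw [tsum_rec u (fun w => if w.length ≤ n + 1 then 1 else 0)]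
    have h1 : (if ([u] : List V).length ≤ n + 1 then (1:ℝ≥0∞) else 0) = 1 := by
      simp
    rw [h1, mul_one]
    have h2 : ∀ b : V, (∑' w : List V, Wn I c b w
        * (if (u :: w).length ≤ n + 1 then (1:ℝ≥0∞) else 0)) ≤ 1 := by
      intro b
      have : ∀ w : List V, (if (u :: w).length ≤ n + 1 then (1:ℝ≥0∞) else 0)
          = (if w.length ≤ n then 1 else 0) := by
        intro w
        simp only [List.length_cons]
        by_cases h : w.length ≤ n
        · rw [if_pos (by omega), if_pos h]
        · rw [if_neg (by omega), if_neg h]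
      rw [tsum_congr (fun w => by rw [this w])]
      exact ih b
    calc ENNReal.ofReal (1 - Real.sqrt c)
          + ∑ b ∈ I u, ENNReal.ofReal (Real.sqrt c / ((I u).card : ℝ))
            * ∑' w : List V, Wn I c b w * (if (u :: w).length ≤ n + 1 then (1:ℝ≥0∞) else 0)
        ≤ ENNReal.ofReal (1 - Real.sqrt c)
          + ∑ b ∈ I u, ENNReal.ofReal (Real.sqrt c / ((I u).card : ℝ)) * 1 := by
          gcongr with b hb
          exact h2 b
      _ = 1 := by
          have hcc : ∑ _b ∈ I u, ENNReal.ofReal (Real.sqrt c / ((I u).card : ℝ)) * 1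
              = ((I u).card : ℝ≥0∞) * ENNReal.ofReal (Real.sqrt c / ((I u).card : ℝ)) := by
            simp [Finset.sum_const, nsmul_eq_mul]
          rw [hcc, ofReal_one_split hc0 hc1 u (hI u)]

lemma mass_le_one [Fintype V] (hI : ∀ v : V, (I v).Nonempty) (hc0 : 0 < c) (hc1 : c < 1)
    (u : V) : ∑' w : List V, Wn I c u w ≤ 1 := by
  rw [ENNReal.tsum_eq_iSup_sum]
  refine iSup_le fun F => ?_
  set n := F.sup List.length with hn
  calc ∑ w ∈ F, Wn I c u w
      = ∑ w ∈ F, Wn I c u w * (if w.length ≤ n then 1 else 0) := by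
        refine Finset.sum_congr rfl fun w hw => ?_
        rw [if_pos (Finset.le_sup hw), mul_one]
    _ ≤ ∑' w : List V, Wn I c u w * (if w.length ≤ n then 1 else 0) :=
        ENNReal.sum_le_tsum F
    _ ≤ 1 := trunc_le_one hI hc0 hc1 n u

lemma mass_eq_one [Fintype V] [Nonempty V] (hI : ∀ v : V, (I v).Nonempty)
    (hc0 : 0 < c) (hc1 : c < 1) (u : V) : ∑' w : List V, Wn I c u w = 1 := by
  set S : V → ℝ≥0∞ := fun x => ∑' w : List V, Wn I c x w with hS
  have hle : ∀ x, S x ≤ 1 := fun x => mass_le_one hI hc0 hc1 x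
  have hne : ∀ x, S x ≠ ⊤ := fun x => (lt_of_le_of_lt (hle x) ENNReal.one_lt_top).ne
  have hrec : ∀ x, S x = ENNReal.ofReal (1 - Real.sqrt c)
      + ∑ b ∈ I x, ENNReal.ofReal (Real.sqrt c / ((I x).card : ℝ)) * S b := by
    intro x
    have := tsum_rec (I := I) (c := c) x (fun _ => 1)
    simpa using this
  set Sr : V → ℝ := fun x => (S x).toReal with hSr
  have hSr_le : ∀ x, Sr x ≤ 1 := by
    intro x
    have := ENNReal.toReal_mono (by simp) (hle x)
    simpa using this
  have hSr_rec : ∀ x, Sr x = (1 - Real.sqrt c)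
      + ∑ b ∈ I x, Real.sqrt c / ((I x).card : ℝ) * Sr b := by
    intro x
    have h := congrArg ENNReal.toReal (hrec x)
    rw [ENNReal.toReal_add ENNReal.ofReal_ne_top
      (by
        refine (ENNReal.sum_lt_top.mpr fun b _ => ?_).ne
        exact ENNReal.mul_lt_top ENNReal.ofReal_lt_top (hne b).lt_top)] at h
    rw [ENNReal.toReal_sum (fun b _ => ENNReal.mul_ne_top ENNReal.ofReal_ne_top (hne b))] at h
    simp only [ENNReal.toReal_mul,
      ENNReal.toReal_ofReal (by have := Real.sqrt_le_one.mpr hc1.le; linarith : (0:ℝ) ≤ 1 - Real.sqrt c),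
      ENNReal.toReal_ofReal (div_nonneg (Real.sqrt_nonneg c) (Nat.cast_nonneg _))] at h
    exact h
  obtain ⟨u0, -, hmin⟩ := Finset.exists_min_image Finset.univ Sr Finset.univ_nonempty
  have hs1 : Real.sqrt c < 1 := by
    have := (Real.sqrt_lt' one_pos).mpr (by linarith : c < 1 ^ 2)
    simpa using this
  have hcard0 : (0:ℝ) < ((I u0).card : ℝ) := by exact_mod_cast (hI u0).card_pos
  have h1 : (1:ℝ) ≤ Sr u0 := by
    have hgeq : Sr u0 ≥ (1 - Real.sqrt c) + Real.sqrt c * Sr u0 := by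
      have hx := hSr_rec u0
      have : ∑ b ∈ I u0, Real.sqrt c / ((I u0).card : ℝ) * Sr b
          ≥ ∑ _b ∈ I u0, Real.sqrt c / ((I u0).card : ℝ) * Sr u0 := by
        refine Finset.sum_le_sum fun b _ => ?_
        exact mul_le_mul_of_nonneg_left (hmin b (Finset.mem_univ b))
          (div_nonneg (Real.sqrt_nonneg c) (Nat.cast_nonneg _))
      have hconst : ∑ _b ∈ I u0, Real.sqrt c / ((I u0).card : ℝ) * Sr u0
          = Real.sqrt c * Sr u0 := by
        rw [Finset.sum_const, nsmul_eq_mul]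
        rw [← mul_assoc, mul_div_cancel₀ _ (ne_of_gt hcard0)]
      linarith [this, hconst.le, hconst.ge]
    nlinarith [hs1]
  have hSx : ∀ x, Sr x = 1 := fun x => le_antisymm (hSr_le x) (le_trans h1 (hmin x (Finset.mem_univ x)))
  have := hSx u
  rw [hSr] at this
  exact (ENNReal.toReal_eq_one_iff _).mp this

lemma score_nonneg (q : List V) : ∀ (j : ℕ) (x : V), 0 ≤ Score I c q j x := by
  intro j
  induction j with
  | zero =>
    intro x
    rw [Score]
    split <;> norm_num
  | succ j ih =>
    intro x
    rw [Score]
    split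
    · exact le_refl 0
    · exact Finset.sum_nonneg fun b _ => mul_nonneg
        (div_nonneg (Real.sqrt_nonneg c) (Nat.cast_nonneg _)) (ih b)

noncomputable def mInd (q : List V) (j : ℕ) (w : List V) : ℝ≥0∞ :=
  if j + 1 ≤ w.length ∧ w[j]? = q[0]? ∧ ∀ m < j, w[m]? ≠ q[j - m]? then 1 else 0

lemma mInd_cons (q : List V) (j : ℕ) (x : V) (w : List V) :
    mInd q (j + 1) (x :: w) = if q[j + 1]? = some x then 0 else mInd q j w := by
  by_cases hq : q[j + 1]? = some x
  · rw [if_pos hq]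
    rw [mInd, if_neg]
    rintro ⟨-, -, hall⟩
    exact hall 0 (by omega) (by simpa using hq.symm)
  · rw [if_neg hq, mInd, mInd]
    refine if_congr ?_ rfl rfl
    constructor
    · rintro ⟨hlen, heq, hall⟩
      refine ⟨by simpa using hlen, by simpa using heq, fun m hm => ?_⟩
      have := hall (m + 1) (by omega)
      simpa [Nat.succ_sub_succ] using this
    · rintro ⟨hlen, heq, hall⟩
      refine ⟨by simpa using hlen, by simpa using heq, fun m hm => ?_⟩
      cases m with
      | zero =>
        simp only [List.getElem?_cons_zero, Nat.sub_zero]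
        exact fun h => hq h.symm
      | succ m =>
        have := hall m (by omega)
        simpa [Nat.succ_sub_succ] using this

lemma score_match [Fintype V] [Nonempty V] (hI : ∀ v : V, (I v).Nonempty)
    (hc0 : 0 < c) (hc1 : c < 1) (q : List V) (j : ℕ) (x : V) :
    ENNReal.ofReal (Score I c q j x) = ∑' w : List V, Wn I c x w * mInd q j w := by
  induction j generalizing x with
  | zero =>
    have h1 : ∀ w : List V, Wn I c x w * mInd q 0 w
        = Wn I c x w * (if q[0]? = some x then 1 else 0) := by
      intro w
      by_cases hw : IsWalkFrom I x w
      · obtain ⟨hh, -⟩ := hw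
        have h0 : w[0]? = some x := by rw [← List.head?_eq_getElem?]; exact hh
        have hlen : 1 ≤ w.length := by
          cases w with
          | nil => simp at hh
          | cons a t => simp
        congr 1
        rw [mInd]
        refine if_congr ?_ rfl rfl
        simp only [h0]
        constructor
        · rintro ⟨-, heq, -⟩; exact heq.symm
        · intro heq; exact ⟨hlen, heq.symm, fun m hm => by omega⟩
      · have hz : walkWeight I c x w = 0 := by rw [walkWeight, if_neg hw]
        simp [Wn, hz]
    rw [tsum_congr h1, ENNReal.tsum_mul_right, mass_eq_one hI hc0 hc1 x, one_mul]
    rw [Score, List.head?_eq_getElem?]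
    split <;> simp
  | succ j ih =>
    rw [tsum_rec x (mInd q (j + 1))]
    have h0 : mInd q (j + 1) [x] = 0 := by
      rw [mInd, if_neg]
      rintro ⟨hlen, -, -⟩
      simp at hlen
    rw [h0, mul_zero, zero_add]
    by_cases hq : q[j + 1]? = some x
    · have hz : ∀ b : V, (∑' w : List V, Wn I c b w * mInd q (j + 1) (x :: w)) = 0 := by
        intro b
        have : ∀ w : List V, Wn I c b w * mInd q (j + 1) (x :: w) = 0 := fun w => by
          rw [mInd_cons, if_pos hq, mul_zero]
        rw [tsum_congr this]
        simp
      rw [Score, if_pos hq]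
      simp [hz]
    · have hb : ∀ b : V, (∑' w : List V, Wn I c b w * mInd q (j + 1) (x :: w))
          = ENNReal.ofReal (Score I c q j b) := by
        intro b
        rw [tsum_congr (fun w => by rw [mInd_cons, if_neg hq]), ← ih b]
      simp only [hb]
      rw [Score, if_neg hq]
      rw [ENNReal.ofReal_sum_of_nonneg (fun b _ => mul_nonneg
        (div_nonneg (Real.sqrt_nonneg c) (Nat.cast_nonneg _)) (score_nonneg q j b))]
      refine Finset.sum_congr rfl fun b _ => ?_
      rw [ENNReal.ofReal_mul (div_nonneg (Real.sqrt_nonneg c) (Nat.cast_nonneg _))]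

lemma take_rev_getElem? (p : List V) {i m : ℕ} (hi : i ≤ p.length) (hm : m < i) :
    ((p.take i).reverse)[m]? = p[i - 1 - m]? := by
  have hlen : (p.take i).length = i := by rw [List.length_take]; omega
  rw [List.getElem?_reverse (by rw [hlen]; exact hm), hlen,
    List.getElem?_take_of_lt (by omega)]

lemma mInd_eval (p : List V) (w : List V) {i : ℕ} (h2 : 2 ≤ i) (hi : i ≤ p.length) :
    mInd ((p.take i).reverse) (i - 1) w
      = if i ≤ w.length ∧ w[i - 1]? = p[i - 1]? ∧ ∀ m < i - 1, w[m]? ≠ p[m]? then 1 else 0 := by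
  rw [mInd]
  refine if_congr ?_ rfl rfl
  have hq0 : ((p.take i).reverse)[0]? = p[i - 1]? := by
    rw [take_rev_getElem? p hi (by omega)]
    congr 1
  have hqm : ∀ m < i - 1, ((p.take i).reverse)[i - 1 - m]? = p[m]? := by
    intro m hm
    rw [take_rev_getElem? p hi (by omega)]
    congr 1
    omega
  constructor
  · rintro ⟨hlen, heq, hall⟩
    refine ⟨by omega, by rwa [hq0] at heq, fun m hm => ?_⟩
    have := hall m hm
    rwa [hqm m hm] at this
  · rintro ⟨hlen, heq, hall⟩
    refine ⟨by omega, by rwa [hq0], fun m hm => ?_⟩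
    rw [hqm m hm]
    exact hall m hm

end ProbeAux

/-- For a fixed sequence `W = p = (u_1,…,u_ℓ)` with `u_{k+1} ∈ I(u_k)` and
`v ≠ u_1`, the single-trial estimator `s̃_W(v)` equals the probability that a
`√c`-walk from `v` has, for some `2 ≤ k ≤ ℓ`, length at least `k` with its
`k`-th entry equal to `u_k`; in particular `0 ≤ s̃_W(v) ≤ 1`. -/
theorem estimator_eq_meet_prob [Fintype V]
    (I : V → Finset V) (hI : ∀ v, (I v).Nonempty)
    (c : ℝ) (hc0 : 0 < c) (hc1 : c < 1)
    (p : List V) (hchain : List.Chain' (fun a b => b ∈ I a) p)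
    (v : V) (hv : p.head? ≠ some v) :
    estimator I c p v =
        (∑' w : List V,
          walkWeight I c v w *
            (if ∃ k, 2 ≤ k ∧ k ≤ p.length ∧ k ≤ w.length ∧ w[k - 1]? = p[k - 1]?
             then 1 else 0)) ∧
      0 ≤ estimator I c p v ∧ estimator I c p v ≤ 1 := by
  classical
  haveI : Nonempty V := ⟨v⟩
  open ProbeAux in
  set E : List V → Prop := fun w =>
    ∃ k, 2 ≤ k ∧ k ≤ p.length ∧ k ≤ w.length ∧ w[k - 1]? = p[k - 1]? with hE
  have hestnn : 0 ≤ estimator I c p v :=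
    Finset.sum_nonneg fun i _ => ProbeAux.score_nonneg _ _ _
  -- main identity in ℝ≥0∞
  have hmain : ENNReal.ofReal (estimator I c p v)
      = ∑' w : List V, ProbeAux.Wn I c v w * (if E w then 1 else 0) := by
    rw [estimator,
      ENNReal.ofReal_sum_of_nonneg (fun i _ => ProbeAux.score_nonneg _ _ _)]
    calc ∑ i ∈ Finset.Icc 2 p.length,
            ENNReal.ofReal (Score I c ((p.take i).reverse) (i - 1) v)
        = ∑ i ∈ Finset.Icc 2 p.length,
            ∑' w : List V, ProbeAux.Wn I c v w * ProbeAux.mInd ((p.take i).reverse) (i - 1) w := by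
          exact Finset.sum_congr rfl fun i _ =>
            ProbeAux.score_match hI hc0 hc1 ((p.take i).reverse) (i - 1) v
      _ = ∑' w : List V, ∑ i ∈ Finset.Icc 2 p.length,
            ProbeAux.Wn I c v w * ProbeAux.mInd ((p.take i).reverse) (i - 1) w :=
          (Summable.tsum_finsetSum (fun i _ => ENNReal.summable)).symm
      _ = ∑' w : List V, ProbeAux.Wn I c v w * (if E w then 1 else 0) := by
          refine tsum_congr fun w => ?_
          rw [← Finset.mul_sum]
          by_cases hw : IsWalkFrom I v w
          · congr 1
            -- ∑ i, mInd = indicator of E w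
            by_cases hEw : E w
            · rw [if_pos hEw]
              have hex : ∃ k, 2 ≤ k ∧ k ≤ p.length ∧ k ≤ w.length
                  ∧ w[k - 1]? = p[k - 1]? := hEw
              obtain ⟨hA, hB, hC, hD⟩ := Nat.find_spec hex
              have hmem : Nat.find hex ∈ Finset.Icc 2 p.length :=
                Finset.mem_Icc.mpr ⟨hA, hB⟩
              rw [Finset.sum_eq_single_of_mem (Nat.find hex) hmem ?hzero]
              · rw [ProbeAux.mInd_eval p w hA hB, if_pos]
                refine ⟨hC, hD, fun m hm heq => ?_⟩
                match m, hm, heq with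
                | 0, hm, heq =>
                  have hw0 : w[0]? = some v := by
                    rw [← List.head?_eq_getElem?]; exact hw.1
                  rw [hw0] at heq
                  rw [← List.head?_eq_getElem?] at heq
                  exact hv heq.symm
                | (m + 1), hm, heq =>
                  have hnot := Nat.find_min hex (m := m + 2) (by omega)
                  exact hnot ⟨by omega, by omega, by omega, by simpa using heq⟩
              case hzero =>
                intro i hi hne
                rw [Finset.mem_Icc] at hi
                rw [ProbeAux.mInd_eval p w hi.1 hi.2, if_neg]
                rintro ⟨hlen, heq, hall⟩
                rcases lt_or_gt_of_ne hne with hlt | hgt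
                · exact Nat.find_min hex hlt ⟨hi.1, hi.2, hlen, heq⟩
                · exact hall (Nat.find hex - 1) (by omega) hD
            · rw [if_neg hEw]
              refine Finset.sum_eq_zero fun i hi => ?_
              rw [Finset.mem_Icc] at hi
              rw [ProbeAux.mInd_eval p w hi.1 hi.2, if_neg]
              rintro ⟨hlen, heq, -⟩
              exact hEw ⟨i, hi.1, hi.2, hlen, heq⟩
          · have hz : walkWeight I c v w = 0 := by rw [walkWeight, if_neg hw]
            simp [ProbeAux.Wn, hz]
  have hww := ProbeAux.ww_nonneg (I := I) (c := c) hc0.le hc1.le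
  have hterm : ∀ w : List V, ProbeAux.Wn I c v w * (if E w then 1 else 0)
      = ENNReal.ofReal (walkWeight I c v w * (if E w then (1:ℝ) else 0)) := by
    intro w
    rw [ENNReal.ofReal_mul (hww v w), ProbeAux.Wn]
    congr 1
    split <;> simp
  have heq1 : estimator I c p v
      = ∑' w : List V, walkWeight I c v w * (if E w then (1:ℝ) else 0) := by
    have h2 := ENNReal.tsum_toReal_eq
      (f := fun w : List V => ENNReal.ofReal (walkWeight I c v w * (if E w then (1:ℝ) else 0)))
      (fun w => ENNReal.ofReal_ne_top)
    rw [tsum_congr (fun w => (hterm w).symm), ← hmain, ENNReal.toReal_ofReal hestnn] at h2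
    rw [h2]
    refine tsum_congr fun w => ?_
    rw [ENNReal.toReal_ofReal]
    exact mul_nonneg (hww v w) (by split <;> norm_num)
  refine ⟨heq1, hestnn, ?_⟩
  have hle : ENNReal.ofReal (estimator I c p v) ≤ 1 := by
    rw [hmain]
    calc ∑' w : List V, ProbeAux.Wn I c v w * (if E w then 1 else 0)
        ≤ ∑' w : List V, ProbeAux.Wn I c v w := by
          refine ENNReal.tsum_le_tsum fun w => ?_
          split <;> simp
      _ = 1 := ProbeAux.mass_eq_one hI hc0 hc1 v
  exact ENNReal.ofReal_le_one.mp hle
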